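/- Let θ(t,λ) be the Prüfer angle as above with θ(a,λ) = α ∈ [0,π). Then for every t ∈ (a,b], θ(t,λ) → 0 as λ → −∞. -/

import Mathlib

open MeasureTheory intervalIntegral Set Real Filter

namespace Stmt11Aux

lemma sin_sq_band {ε x : ℝ} (hε0 : 0 < ε) (hε : ε ≤ π / 2) (h1 : ε ≤ x) (h2 : x ≤ π - ε) :
    Real.sin ε ^ 2 ≤ Real.sin x ^ 2 := by
  have hsε : 0 ≤ Real.sin ε :=
    Real.sin_nonneg_of_nonneg_of_le_pi hε0.le (by linarith [Real.pi_pos])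
  have key : Real.sin ε ≤ Real.sin x := by
    rcases le_total x (π / 2) with h | h
    · exact Real.sin_le_sin_of_le_of_le_pi_div_two (by linarith) h h1
    · rw [← Real.sin_pi_sub x]
      exact Real.sin_le_sin_of_le_of_le_pi_div_two (by linarith) (by linarith) (by linarith)
  exact pow_le_pow_left₀ hsε key 2

lemma last_cross {Θ : ℝ → ℝ} {a₀ b₀ lev : ℝ}
    (hc : ContinuousOn Θ (Icc a₀ b₀)) (hab : a₀ ≤ b₀) (hb : lev < Θ b₀)
    (hne : ∃ u ∈ Icc a₀ b₀, Θ u ≤ lev) :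
    ∃ x, x ∈ Ico a₀ b₀ ∧ Θ x = lev ∧ ∀ u ∈ Ioc x b₀, lev < Θ u := by
  have hSclosed : IsClosed (Icc a₀ b₀ ∩ Θ ⁻¹' Iic lev) :=
    hc.preimage_isClosed_of_isClosed isClosed_Icc isClosed_Iic
  obtain ⟨u₀, hu₀, hu₀'⟩ := hne
  have hSne : (Icc a₀ b₀ ∩ Θ ⁻¹' Iic lev).Nonempty := ⟨u₀, hu₀, hu₀'⟩
  have hSbdd : BddAbove (Icc a₀ b₀ ∩ Θ ⁻¹' Iic lev) := ⟨b₀, fun u hu => hu.1.2⟩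
  set x := sSup (Icc a₀ b₀ ∩ Θ ⁻¹' Iic lev) with hxdef
  have hxS : x ∈ Icc a₀ b₀ ∩ Θ ⁻¹' Iic lev := hSclosed.csSup_mem hSne hSbdd
  have hxle : Θ x ≤ lev := hxS.2
  have hxb : x ≠ b₀ := by rintro h; rw [h] at hxle; linarith
  have hxlt : x < b₀ := lt_of_le_of_ne hxS.1.2 hxb
  have hgt : ∀ u ∈ Ioc x b₀, lev < Θ u := by
    intro u hu
    by_contra hle
    push_neg at hle
    have : u ≤ x := le_csSup hSbdd ⟨⟨hxS.1.1.trans hu.1.le, hu.2⟩, hle⟩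
    exact absurd hu.1 (not_lt.2 this)
  have hsub : Ioc x b₀ ⊆ Icc a₀ b₀ := fun u hu => ⟨hxS.1.1.trans hu.1.le, hu.2⟩
  have hnb : (nhdsWithin x (Ioc x b₀)).NeBot := by
    rw [← mem_closure_iff_nhdsWithin_neBot, closure_Ioc (ne_of_lt hxlt)]
    exact ⟨le_rfl, hxlt.le⟩
  have htend : Filter.Tendsto Θ (nhdsWithin x (Ioc x b₀)) (nhds (Θ x)) :=
    (hc x hxS.1).mono_left (nhdsWithin_mono x hsub)
  have hge : lev ≤ Θ x :=
    ge_of_tendsto htend (eventually_nhdsWithin_of_forall fun u hu => (hgt u hu).le)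
  exact ⟨x, ⟨hxS.1.1, hxlt⟩, le_antisymm hxle hge, hgt⟩

lemma first_cross {Θ : ℝ → ℝ} {a₀ b₀ lev : ℝ}
    (hc : ContinuousOn Θ (Icc a₀ b₀)) (hab : a₀ ≤ b₀) (ha : Θ a₀ < lev)
    (hne : ∃ u ∈ Icc a₀ b₀, lev ≤ Θ u) :
    ∃ y, y ∈ Ioc a₀ b₀ ∧ Θ y = lev ∧ ∀ u ∈ Ico a₀ y, Θ u < lev := by
  have hSclosed : IsClosed (Icc a₀ b₀ ∩ Θ ⁻¹' Ici lev) :=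
    hc.preimage_isClosed_of_isClosed isClosed_Icc isClosed_Ici
  obtain ⟨u₀, hu₀, hu₀'⟩ := hne
  have hSne : (Icc a₀ b₀ ∩ Θ ⁻¹' Ici lev).Nonempty := ⟨u₀, hu₀, hu₀'⟩
  have hSbdd : BddBelow (Icc a₀ b₀ ∩ Θ ⁻¹' Ici lev) := ⟨a₀, fun u hu => hu.1.1⟩
  set y := sInf (Icc a₀ b₀ ∩ Θ ⁻¹' Ici lev) with hydef
  have hyS : y ∈ Icc a₀ b₀ ∩ Θ ⁻¹' Ici lev := hSclosed.csInf_mem hSne hSbdd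
  have hyge : lev ≤ Θ y := hyS.2
  have hya : y ≠ a₀ := by rintro h; rw [h] at hyge; linarith
  have hylt : a₀ < y := lt_of_le_of_ne hyS.1.1 (Ne.symm hya)
  have hlt : ∀ u ∈ Ico a₀ y, Θ u < lev := by
    intro u hu
    by_contra hle
    push_neg at hle
    have : y ≤ u := csInf_le hSbdd ⟨⟨hu.1, hu.2.le.trans hyS.1.2⟩, hle⟩
    exact absurd hu.2 (not_lt.2 this)
  have hsub : Ico a₀ y ⊆ Icc a₀ b₀ := fun u hu => ⟨hu.1, hu.2.le.trans hyS.1.2⟩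
  have hnb : (nhdsWithin y (Ico a₀ y)).NeBot := by
    rw [← mem_closure_iff_nhdsWithin_neBot, closure_Ico (ne_of_lt hylt)]
    exact ⟨hylt.le, le_rfl⟩
  have htend : Filter.Tendsto Θ (nhdsWithin y (Ico a₀ y)) (nhds (Θ y)) :=
    (hc y hyS.1).mono_left (nhdsWithin_mono y hsub)
  have hle : Θ y ≤ lev :=
    le_of_tendsto htend (eventually_nhdsWithin_of_forall fun u hu => (hlt u hu).le)
  exact ⟨y, ⟨hylt, hyS.1.2⟩, le_antisymm hle hyge, hlt⟩

lemma II {a b x y : ℝ} {f : ℝ → ℝ} (hf : IntegrableOn f (Icc a b))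
    (hx : x ∈ Icc a b) (hy : y ∈ Icc a b) : IntervalIntegrable f volume x y := by
  rw [intervalIntegrable_iff]
  refine hf.mono_set fun u hu => ?_
  rw [Set.mem_uIoc] at hu
  rcases hu with h | h
  · exact ⟨hx.1.trans h.1.le, h.2.trans hy.2⟩
  · exact ⟨hy.1.trans h.1.le, h.2.trans hx.2⟩

lemma intOn_mul_bdd {S : Set ℝ} (hms : MeasurableSet S) {f g : ℝ → ℝ}
    (hf : IntegrableOn f S) (hg : ContinuousOn g S) {c : ℝ} (hc : ∀ x ∈ S, |g x| ≤ c) :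
    IntegrableOn (fun u => f u * g u) S := by
  have h := hf.bdd_mul (c := c) (hg.aestronglyMeasurable hms)
    (by filter_upwards [ae_restrict_mem hms] with u hu
        simpa [Real.norm_eq_abs] using hc u hu)
  exact h.congr (Filter.Eventually.of_forall fun u => mul_comm _ _)

lemma integral_r_pos {a b x y : ℝ} {r : ℝ → ℝ} (hr : IntegrableOn r (Icc a b))
    (hrpos : ∀ᵐ u ∂(volume.restrict (Icc a b)), 0 < r u)
    (hx : x ∈ Icc a b) (hy : y ∈ Icc a b) (hxy : x < y) :
    0 < ∫ u in x..y, r u := by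
  rw [intervalIntegral.integral_of_le hxy.le]
  have hsub : Ioc x y ⊆ Icc a b := fun u hu => ⟨hx.1.trans hu.1.le, hu.2.trans hy.2⟩
  have hint : IntegrableOn r (Ioc x y) := hr.mono_set hsub
  have hpos : ∀ᵐ u ∂(volume.restrict (Ioc x y)), 0 < r u :=
    ae_restrict_of_ae_restrict_of_subset hsub hrpos
  by_contra hle
  push_neg at hle
  have hnn : 0 ≤ ∫ u in Ioc x y, r u :=
    MeasureTheory.integral_nonneg_of_ae (hpos.mono fun u hu => hu.le)
  have hz : ∫ u in Ioc x y, r u = 0 := le_antisymm hle hnn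
  rw [MeasureTheory.integral_eq_zero_iff_of_nonneg_ae (hpos.mono fun u hu => hu.le) hint] at hz
  have hfalse : ∀ᵐ u ∂(volume.restrict (Ioc x y)), False := by
    filter_upwards [hz, hpos] with u h0 hpos'
    simp only [Pi.zero_apply] at h0
    rw [h0] at hpos'
    exact lt_irrefl 0 hpos'
  rw [ae_iff] at hfalse
  simp only [not_false_eq_true, setOf_true] at hfalse
  rw [Measure.restrict_apply_univ, Real.volume_Ioc] at hfalse
  rw [ENNReal.ofReal_eq_zero] at hfalse
  linarith



variable {a b : ℝ} {p q r s : ℝ → ℝ}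

lemma integrandIntegrable
    (hp : IntegrableOn (fun x => 1 / p x) (Icc a b)) (hq : IntegrableOn q (Icc a b))
    (hr : IntegrableOn r (Icc a b)) (hs : IntegrableOn s (Icc a b))
    (l : ℝ) {Θ : ℝ → ℝ} (hΘc : ContinuousOn Θ (Icc a b)) :
    IntegrableOn (fun u => 1 / p u * Real.cos (Θ u) ^ 2 - s u * Real.sin (2 * Θ u)
      + (l * r u - q u) * Real.sin (Θ u) ^ 2) (Icc a b) := by
  have hm : MeasurableSet (Icc a b) := measurableSet_Icc
  have hcos : ContinuousOn (fun u => Real.cos (Θ u) ^ 2) (Icc a b) :=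
    (Real.continuous_cos.comp_continuousOn hΘc).pow 2
  have hsin2 : ContinuousOn (fun u => Real.sin (2 * Θ u)) (Icc a b) :=
    Real.continuous_sin.comp_continuousOn (continuousOn_const.mul hΘc)
  have hsinsq : ContinuousOn (fun u => Real.sin (Θ u) ^ 2) (Icc a b) :=
    (Real.continuous_sin.comp_continuousOn hΘc).pow 2
  have h1 : IntegrableOn (fun u => 1 / p u * Real.cos (Θ u) ^ 2) (Icc a b) :=
    intOn_mul_bdd hm hp hcos (c := 1) (fun x _ => by
      rw [abs_of_nonneg (sq_nonneg _)]; exact Real.cos_sq_le_one _)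
  have h2 : IntegrableOn (fun u => s u * Real.sin (2 * Θ u)) (Icc a b) :=
    intOn_mul_bdd hm hs hsin2 (c := 1) (fun x _ => Real.abs_sin_le_one _)
  have h3 : IntegrableOn (fun u => (l * r u - q u) * Real.sin (Θ u) ^ 2) (Icc a b) :=
    intOn_mul_bdd hm ((hr.const_mul l).sub hq) hsinsq (c := 1) (fun x _ => by
      rw [abs_of_nonneg (sq_nonneg _)]; exact Real.sin_sq_le_one _)
  exact (h1.sub h2).add h3

lemma hIntegrable (hp : IntegrableOn (fun x => 1 / p x) (Icc a b))
    (hq : IntegrableOn q (Icc a b)) (hs : IntegrableOn s (Icc a b)) :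
    IntegrableOn (fun u => |1 / p u| + |s u| + |q u|) (Icc a b) :=
  (hp.abs.add hs.abs).add hq.abs

lemma key_est
    (hp : IntegrableOn (fun x => 1 / p x) (Icc a b)) (hq : IntegrableOn q (Icc a b))
    (hr : IntegrableOn r (Icc a b)) (hs : IntegrableOn s (Icc a b))
    (hrpos : ∀ᵐ x ∂(volume.restrict (Icc a b)), 0 < r x)
    {l : ℝ} (hl : l ≤ 0) {Θ : ℝ → ℝ} (hΘc : ContinuousOn Θ (Icc a b))
    (hincr : ∀ x ∈ Icc a b, ∀ y ∈ Icc a b, Θ y - Θ x = ∫ u in x..y,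
       (1 / p u * Real.cos (Θ u) ^ 2 - s u * Real.sin (2 * Θ u)
         + (l * r u - q u) * Real.sin (Θ u) ^ 2))
    {K : ℝ} (hK : 0 ≤ K)
    {x y : ℝ} (hx : x ∈ Icc a b) (hy : y ∈ Icc a b) (hxy : x ≤ y)
    (hband : ∀ u ∈ Icc x y, K ≤ Real.sin (Θ u) ^ 2) :
    Θ y - Θ x ≤ (∫ u in x..y, (|1 / p u| + |s u| + |q u|))
      + l * (K * ∫ u in x..y, r u) := by
  have hm : MeasurableSet (Icc a b) := measurableSet_Icc
  have hsinsq : ContinuousOn (fun u => Real.sin (Θ u) ^ 2) (Icc a b) :=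
    (Real.continuous_sin.comp_continuousOn hΘc).pow 2
  have hb1 : ∀ x ∈ Icc a b, |Real.sin (Θ x) ^ 2| ≤ 1 := fun x _ => by
    rw [abs_of_nonneg (sq_nonneg _)]; exact Real.sin_sq_le_one _
  have hf2 : IntegrableOn (fun u => r u * Real.sin (Θ u) ^ 2) (Icc a b) :=
    intOn_mul_bdd hm hr hsinsq (c := 1) hb1
  have hcos : ContinuousOn (fun u => Real.cos (Θ u) ^ 2) (Icc a b) :=
    (Real.continuous_cos.comp_continuousOn hΘc).pow 2
  have hsin2 : ContinuousOn (fun u => Real.sin (2 * Θ u)) (Icc a b) :=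
    Real.continuous_sin.comp_continuousOn (continuousOn_const.mul hΘc)
  have h1 : IntegrableOn (fun u => 1 / p u * Real.cos (Θ u) ^ 2) (Icc a b) :=
    intOn_mul_bdd hm hp hcos (c := 1) (fun x _ => by
      rw [abs_of_nonneg (sq_nonneg _)]; exact Real.cos_sq_le_one _)
  have h2 : IntegrableOn (fun u => s u * Real.sin (2 * Θ u)) (Icc a b) :=
    intOn_mul_bdd hm hs hsin2 (c := 1) (fun x _ => Real.abs_sin_le_one _)
  have h4 : IntegrableOn (fun u => q u * Real.sin (Θ u) ^ 2) (Icc a b) :=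
    intOn_mul_bdd hm hq hsinsq (c := 1) hb1
  have hf1 : IntegrableOn (fun u => 1 / p u * Real.cos (Θ u) ^ 2
      - s u * Real.sin (2 * Θ u) - q u * Real.sin (Θ u) ^ 2) (Icc a b) := (h1.sub h2).sub h4
  have hh : IntegrableOn (fun u => |1 / p u| + |s u| + |q u|) (Icc a b) := hIntegrable hp hq hs
  -- split the integral
  have split : (∫ u in x..y, (1 / p u * Real.cos (Θ u) ^ 2 - s u * Real.sin (2 * Θ u)
        + (l * r u - q u) * Real.sin (Θ u) ^ 2))
      = (∫ u in x..y, (1 / p u * Real.cos (Θ u) ^ 2 - s u * Real.sin (2 * Θ u)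
          - q u * Real.sin (Θ u) ^ 2))
        + l * ∫ u in x..y, r u * Real.sin (Θ u) ^ 2 := by
    rw [← intervalIntegral.integral_const_mul,
      ← intervalIntegral.integral_add (II hf1 hx hy) ((II hf2 hx hy).const_mul l)]
    apply intervalIntegral.integral_congr
    intro u _
    ring
  -- first estimate
  have est1 : (∫ u in x..y, (1 / p u * Real.cos (Θ u) ^ 2 - s u * Real.sin (2 * Θ u)
      - q u * Real.sin (Θ u) ^ 2)) ≤ ∫ u in x..y, (|1 / p u| + |s u| + |q u|) := by
    apply intervalIntegral.integral_mono_on hxy (II hf1 hx hy) (II hh hx hy)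
    intro u hu
    have hum : u ∈ Icc a b := ⟨hx.1.trans hu.1, hu.2.trans hy.2⟩
    have c1 : 1 / p u * Real.cos (Θ u) ^ 2 ≤ |1 / p u| :=
      calc 1 / p u * Real.cos (Θ u) ^ 2 ≤ |1 / p u * Real.cos (Θ u) ^ 2| := le_abs_self _
        _ = |1 / p u| * |Real.cos (Θ u) ^ 2| := abs_mul _ _
        _ ≤ |1 / p u| * 1 := mul_le_mul_of_nonneg_left
            (by rw [abs_of_nonneg (sq_nonneg _)]; exact Real.cos_sq_le_one _) (abs_nonneg _)
        _ = |1 / p u| := mul_one _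
    have c2 : -(s u * Real.sin (2 * Θ u)) ≤ |s u| :=
      calc -(s u * Real.sin (2 * Θ u)) ≤ |s u * Real.sin (2 * Θ u)| := neg_le_abs _
        _ = |s u| * |Real.sin (2 * Θ u)| := abs_mul _ _
        _ ≤ |s u| * 1 := mul_le_mul_of_nonneg_left (Real.abs_sin_le_one _) (abs_nonneg _)
        _ = |s u| := mul_one _
    have c3 : -(q u * Real.sin (Θ u) ^ 2) ≤ |q u| :=
      calc -(q u * Real.sin (Θ u) ^ 2) ≤ |q u * Real.sin (Θ u) ^ 2| := neg_le_abs _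
        _ = |q u| * |Real.sin (Θ u) ^ 2| := abs_mul _ _
        _ ≤ |q u| * 1 := mul_le_mul_of_nonneg_left (hb1 u hum) (abs_nonneg _)
        _ = |q u| := mul_one _
    linarith
  -- second estimate
  have est2 : K * (∫ u in x..y, r u) ≤ ∫ u in x..y, r u * Real.sin (Θ u) ^ 2 := by
    rw [← intervalIntegral.integral_const_mul]
    apply intervalIntegral.integral_mono_ae_restrict hxy
      ((II hr hx hy).const_mul K) (II hf2 hx hy)
    have hsub : Icc x y ⊆ Icc a b := Icc_subset_Icc hx.1 hy.2
    have h1' : ∀ᵐ u ∂(volume.restrict (Icc x y)), 0 < r u :=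
      ae_restrict_of_ae_restrict_of_subset hsub hrpos
    filter_upwards [h1', ae_restrict_mem measurableSet_Icc] with u hru hum
    calc K * r u = r u * K := mul_comm _ _
      _ ≤ r u * Real.sin (Θ u) ^ 2 := mul_le_mul_of_nonneg_left (hband u hum) hru.le
  -- combine
  have hstep : l * (∫ u in x..y, r u * Real.sin (Θ u) ^ 2) ≤ l * (K * ∫ u in x..y, r u) :=
    mul_le_mul_of_nonpos_left est2 hl
  rw [hincr x hx y hy, split]
  linarith

end Stmt11Aux

namespace Stmt11Aux2
open Stmt11Aux

variable {a b : ℝ} {p q r s : ℝ → ℝ}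

lemma theta_nonneg (hab : a < b)
    (hp : IntegrableOn (fun x => 1 / p x) (Icc a b)) (hq : IntegrableOn q (Icc a b))
    (hr : IntegrableOn r (Icc a b)) (hs : IntegrableOn s (Icc a b))
    (hppos : ∀ᵐ x ∂(volume.restrict (Icc a b)), 0 < p x)
    {l : ℝ} {Θ : ℝ → ℝ} (hΘc : ContinuousOn Θ (Icc a b))
    (hincr : ∀ x ∈ Icc a b, ∀ y ∈ Icc a b, Θ y - Θ x = ∫ u in x..y,
       (1 / p u * Real.cos (Θ u) ^ 2 - s u * Real.sin (2 * Θ u)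
         + (l * r u - q u) * Real.sin (Θ u) ^ 2))
    (hΘa : 0 ≤ Θ a) : ∀ x ∈ Icc a b, 0 ≤ Θ x := by
  by_contra hcon
  push_neg at hcon
  obtain ⟨x₀, hx₀m, hx₀⟩ := hcon
  have hax₀ : a < x₀ := by
    rcases lt_or_eq_of_le hx₀m.1 with h | h
    · exact h
    · rw [← h] at hx₀; linarith
  -- last point where Θ = 0 before x₀
  obtain ⟨c, hcm, hceq, hclt⟩ := last_cross (Θ := fun u => -Θ u) (lev := 0)
      ((hΘc.mono (Icc_subset_Icc_right hx₀m.2)).neg) hax₀.le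
      (by simpa using hx₀) ⟨a, ⟨le_rfl, hax₀.le⟩, by simpa using hΘa⟩
  have hΘc0 : Θ c = 0 := by simpa [neg_eq_zero] using hceq
  have hneg : ∀ u ∈ Ioc c x₀, Θ u < 0 := fun u hu => by
    have := hclt u hu; simpa using this
  have hcmem : c ∈ Icc a b := ⟨hcm.1, hcm.2.le.trans hx₀m.2⟩
  -- global bound B on |Θ|
  obtain ⟨uB, huBm, huB'⟩ := isCompact_Icc.exists_isMaxOn (f := fun u => |Θ u|)
      ⟨a, left_mem_Icc.2 hab.le⟩ (continuous_abs.comp_continuousOn hΘc)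
  have hBnn : 0 ≤ |Θ uB| := abs_nonneg _
  have hBbd : ∀ u ∈ Icc a b, |Θ u| ≤ |Θ uB| := fun u hu => huB' hu
  -- integrable dominating function g
  have hgint : IntegrableOn
      (fun u => 2 * |s u| + (|l| * |r u| + |q u|) * |Θ uB|) (Icc a b) :=
    (hs.abs.const_mul 2).add (((hr.abs.const_mul |l|).add hq.abs).mul_const _)
  have hgnn : ∀ u, 0 ≤ 2 * |s u| + (|l| * |r u| + |q u|) * |Θ uB| := fun u => by positivity
  -- choose d ∈ Ioc c x₀ with small integral of g
  obtain ⟨d, hdm, hdint⟩ : ∃ d, d ∈ Ioc c x₀ ∧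
      (∫ u in c..d, (2 * |s u| + (|l| * |r u| + |q u|) * |Θ uB|)) < 1/2 := by
    have hgint' : IntegrableOn
        (fun u => 2 * |s u| + (|l| * |r u| + |q u|) * |Θ uB|) (uIcc c x₀) := by
      apply hgint.mono_set
      rw [uIcc_of_le hcm.2.le]
      exact Icc_subset_Icc hcmem.1 hx₀m.2
    have hGc := intervalIntegral.continuousOn_primitive_interval hgint'
    have hcw := hGc c left_mem_uIcc
    have h0 : (∫ u in c..c, (2 * |s u| + (|l| * |r u| + |q u|) * |Θ uB|)) = 0 :=
      intervalIntegral.integral_same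
    have htend : Filter.Tendsto
        (fun z => ∫ u in c..z, (2 * |s u| + (|l| * |r u| + |q u|) * |Θ uB|))
        (nhdsWithin c (Ioc c x₀)) (nhds 0) := by
      rw [← h0]
      refine hcw.mono_left (nhdsWithin_mono c ?_)
      rw [uIcc_of_le hcm.2.le]
      exact Ioc_subset_Icc_self
    haveI hnb : (nhdsWithin c (Ioc c x₀)).NeBot := by
      rw [← mem_closure_iff_nhdsWithin_neBot, closure_Ioc (ne_of_lt hcm.2)]
      exact ⟨le_rfl, hcm.2.le⟩
    have hev := htend.eventually (gt_mem_nhds (show (0:ℝ) < 1/2 by norm_num))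
    obtain ⟨d, hd1, hd2⟩ := (hev.and eventually_mem_nhdsWithin).exists
    exact ⟨d, hd2, hd1⟩
  have hdmem : d ∈ Icc a b := ⟨hcmem.1.trans hdm.1.le, hdm.2.trans hx₀m.2⟩
  -- maximum of -Θ on [c,d]
  obtain ⟨x₁, hx₁m, hx₁max⟩ := isCompact_Icc.exists_isMaxOn (f := fun u => -Θ u)
      ⟨c, left_mem_Icc.2 hdm.1.le⟩ ((hΘc.mono (Icc_subset_Icc hcmem.1 hdmem.2)).neg)
  have hx₁mem : x₁ ∈ Icc a b := ⟨hcmem.1.trans hx₁m.1, hx₁m.2.trans hdmem.2⟩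
  have hMd : -Θ d ≤ -Θ x₁ := hx₁max (right_mem_Icc.2 hdm.1.le)
  have hMpos : 0 < -Θ x₁ := lt_of_lt_of_le (by have := hneg d hdm; linarith) hMd
  -- a.e. lower bound for the integrand on [c, x₁]
  have hsub : Icc c x₁ ⊆ Icc a b := Icc_subset_Icc hcmem.1 hx₁mem.2
  have hae : ∀ᵐ u ∂(volume.restrict (Icc c x₁)),
      (-(-Θ x₁)) * (2 * |s u| + (|l| * |r u| + |q u|) * |Θ uB|)
        ≤ 1 / p u * Real.cos (Θ u) ^ 2 - s u * Real.sin (2 * Θ u)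
          + (l * r u - q u) * Real.sin (Θ u) ^ 2 := by
    have h1 : ∀ᵐ u ∂(volume.restrict (Icc c x₁)), 0 < p u :=
      ae_restrict_of_ae_restrict_of_subset hsub hppos
    have h2 : ∀ᵐ u ∂(volume.restrict (Icc c x₁)), u ∈ Ioc c x₁ := by
      rw [Measure.restrict_congr_set (Ioc_ae_eq_Icc (a := c) (b := x₁)).symm]
      exact ae_restrict_mem measurableSet_Ioc
    filter_upwards [h1, h2] with u hpu huIoc
    have hux₀ : u ∈ Ioc c x₀ := ⟨huIoc.1, huIoc.2.trans (hx₁m.2.trans hdm.2)⟩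
    have hΘu : Θ u < 0 := hneg u hux₀
    have humem : u ∈ Icc a b := ⟨hcmem.1.trans huIoc.1.le, hux₀.2.trans hx₀m.2⟩
    have habsM : |Θ u| ≤ -Θ x₁ := by
      rw [abs_of_neg hΘu]
      exact hx₁max ⟨huIoc.1.le, huIoc.2.trans hx₁m.2⟩
    have habsB : |Θ u| ≤ |Θ uB| := hBbd u humem
    have e1 : 0 ≤ 1 / p u * Real.cos (Θ u) ^ 2 :=
      mul_nonneg (by positivity) (sq_nonneg _)
    have e2 : s u * Real.sin (2 * Θ u) ≤ 2 * |s u| * (-Θ x₁) := by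
      calc s u * Real.sin (2 * Θ u) ≤ |s u * Real.sin (2 * Θ u)| := le_abs_self _
        _ = |s u| * |Real.sin (2 * Θ u)| := abs_mul _ _
        _ ≤ |s u| * (2 * (-Θ x₁)) := by
            refine mul_le_mul_of_nonneg_left ?_ (abs_nonneg _)
            calc |Real.sin (2 * Θ u)| ≤ |2 * Θ u| := Real.abs_sin_le_abs
              _ = 2 * |Θ u| := by rw [abs_mul]; norm_num
              _ ≤ 2 * (-Θ x₁) := by linarith
        _ = 2 * |s u| * (-Θ x₁) := by ring
    have e3 : -((|l| * |r u| + |q u|) * (|Θ uB| * (-Θ x₁)))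
        ≤ (l * r u - q u) * Real.sin (Θ u) ^ 2 := by
      have h31 : |(l * r u - q u) * Real.sin (Θ u) ^ 2|
          ≤ (|l| * |r u| + |q u|) * (|Θ uB| * (-Θ x₁)) := by
        rw [abs_mul]
        refine mul_le_mul ?_ ?_ (abs_nonneg _) (by positivity)
        · calc |l * r u - q u| ≤ |l * r u| + |q u| := abs_sub _ _
            _ = |l| * |r u| + |q u| := by rw [abs_mul]
        · rw [abs_of_nonneg (sq_nonneg _)]
          calc Real.sin (Θ u) ^ 2 = |Real.sin (Θ u)| ^ 2 := (sq_abs _).symm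
            _ ≤ |Θ u| ^ 2 := pow_le_pow_left₀ (abs_nonneg _) Real.abs_sin_le_abs 2
            _ = |Θ u| * |Θ u| := sq _
            _ ≤ |Θ uB| * (-Θ x₁) := mul_le_mul habsB habsM (abs_nonneg _) hBnn
      linarith [neg_abs_le ((l * r u - q u) * Real.sin (Θ u) ^ 2)]
    nlinarith [e1, e2, e3]
  -- integral comparison
  have hcx₁ : c ≤ x₁ := hx₁m.1
  have hFint := integrandIntegrable hp hq hr hs l hΘc
  have hIf := II hFint hcmem hx₁mem
  have hIg := (II hgint hcmem hx₁mem).const_mul (-(-Θ x₁))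
  have hkey := intervalIntegral.integral_mono_ae_restrict hcx₁ hIg hIf hae
  rw [intervalIntegral.integral_const_mul] at hkey
  have hΘx₁ := hincr c hcmem x₁ hx₁mem
  have hgmono : (∫ u in c..x₁, (2 * |s u| + (|l| * |r u| + |q u|) * |Θ uB|))
      ≤ ∫ u in c..d, (2 * |s u| + (|l| * |r u| + |q u|) * |Θ uB|) := by
    have hadd := intervalIntegral.integral_add_adjacent_intervals
      (II hgint hcmem hx₁mem) (II hgint hx₁mem hdmem)
    have hnn : 0 ≤ ∫ u in x₁..d, (2 * |s u| + (|l| * |r u| + |q u|) * |Θ uB|) :=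
      intervalIntegral.integral_nonneg hx₁m.2 (fun u _ => hgnn u)
    linarith
  have hgle : (∫ u in c..x₁, (2 * |s u| + (|l| * |r u| + |q u|) * |Θ uB|)) ≤ 1/2 :=
    hgmono.trans hdint.le
  have hgnn' : 0 ≤ ∫ u in c..x₁, (2 * |s u| + (|l| * |r u| + |q u|) * |Θ uB|) :=
    intervalIntegral.integral_nonneg hcx₁ (fun u _ => hgnn u)
  nlinarith [hkey, hΘx₁, hMpos, hgle, hgnn',
    mul_le_mul_of_nonneg_left hgle hMpos.le]

end Stmt11Aux2

namespace Stmt11Aux2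
open Stmt11Aux

lemma noclimb {a b : ℝ} {p q r s : ℝ → ℝ} (hab : a < b)
    (hp : IntegrableOn (fun x => 1 / p x) (Icc a b)) (hq : IntegrableOn q (Icc a b))
    (hr : IntegrableOn r (Icc a b)) (hs : IntegrableOn s (Icc a b))
    (hrpos : ∀ᵐ x ∂(volume.restrict (Icc a b)), 0 < r x)
    {ε K : ℝ} (hε0 : 0 < ε) (hK : 0 < K) :
    ∃ Λ : ℝ, Λ < 0 ∧ ∀ l : ℝ, l ≤ Λ → ∀ Θ : ℝ → ℝ, ContinuousOn Θ (Icc a b) →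
      (∀ x ∈ Icc a b, ∀ y ∈ Icc a b, Θ y - Θ x = ∫ u in x..y,
        (1 / p u * Real.cos (Θ u) ^ 2 - s u * Real.sin (2 * Θ u)
          + (l * r u - q u) * Real.sin (Θ u) ^ 2)) →
      ∀ x ∈ Icc a b, ∀ y ∈ Icc a b, x ≤ y →
        (∀ u ∈ Icc x y, K ≤ Real.sin (Θ u) ^ 2) → Θ y - Θ x < ε := by
  have haIcc : a ∈ Icc a b := left_mem_Icc.2 hab.le
  have hbIcc : b ∈ Icc a b := right_mem_Icc.2 hab.le
  have hh : IntegrableOn (fun u => |1 / p u| + |s u| + |q u|) (Icc a b) := hIntegrable hp hq hs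
  have hhnn : ∀ u, 0 ≤ |1 / p u| + |s u| + |q u| := fun u => by positivity
  -- primitive H and its uniform continuity
  have hHcont : ContinuousOn (fun z => ∫ u in a..z, (|1 / p u| + |s u| + |q u|)) (Icc a b) := by
    have := intervalIntegral.continuousOn_primitive_interval
      (a := a) (b := b) (f := fun u => |1 / p u| + |s u| + |q u|) (μ := volume)
      (by rwa [uIcc_of_le hab.le])
    rwa [uIcc_of_le hab.le] at this
  have hHuc := isCompact_Icc.uniformContinuousOn_of_continuous hHcont
  obtain ⟨δ₀, hδ₀, hδ₀'⟩ := Metric.uniformContinuousOn_iff.1 hHuc ε hε0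
  set δ : ℝ := min (δ₀ / 2) (b - a) with hδdef
  have hδpos : 0 < δ := lt_min (by linarith) (by linarith)
  have hδba : δ ≤ b - a := min_le_right _ _
  have hδδ₀ : δ < δ₀ := lt_of_le_of_lt (min_le_left _ _) (by linarith)
  -- primitive of r and the minimum increment ρ over windows of width δ
  have hRcont : ContinuousOn (fun z => ∫ u in a..z, r u) (Icc a b) := by
    have := intervalIntegral.continuousOn_primitive_interval
      (a := a) (b := b) (f := r) (μ := volume) (by rwa [uIcc_of_le hab.le])
    rwa [uIcc_of_le hab.le] at this
  have hmapsto : ∀ x ∈ Icc a (b - δ), x + δ ∈ Icc a b := fun x hx =>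
    ⟨by linarith [hx.1, hδpos.le], by linarith [hx.2]⟩
  have hφcont : ContinuousOn
      (fun x => (∫ u in a..(x + δ), r u) - ∫ u in a..x, r u) (Icc a (b - δ)) := by
    refine ContinuousOn.sub ?_ (hRcont.mono (Icc_subset_Icc_right (by linarith)))
    exact hRcont.comp ((continuous_id.add continuous_const).continuousOn) hmapsto
  have hneΙ : a ≤ b - δ := by linarith
  obtain ⟨x₀, hx₀m, hx₀min⟩ := isCompact_Icc.exists_isMinOn
      ⟨a, left_mem_Icc.2 hneΙ⟩ hφcont
  -- value of the window integral
  have hwin : ∀ x ∈ Icc a (b - δ),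
      (∫ u in a..(x + δ), r u) - (∫ u in a..x, r u) = ∫ u in x..(x + δ), r u := by
    intro x hx
    have hadd := intervalIntegral.integral_add_adjacent_intervals
      (II hr haIcc ⟨hx.1, by linarith [hx.2, hδpos.le]⟩)
      (II hr ⟨hx.1, by linarith [hx.2, hδpos.le]⟩ (hmapsto x hx))
    linarith
  have hρpos : 0 < (∫ u in a..(x₀ + δ), r u) - ∫ u in a..x₀, r u := by
    rw [hwin x₀ hx₀m]
    exact integral_r_pos hr hrpos ⟨hx₀m.1, by linarith [hx₀m.2, hδpos.le]⟩
      (hmapsto x₀ hx₀m) (by linarith)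
  set ρ : ℝ := (∫ u in a..(x₀ + δ), r u) - ∫ u in a..x₀, r u with hρdef
  -- total H
  set tH : ℝ := ∫ u in a..b, (|1 / p u| + |s u| + |q u|) with htHdef
  have htHnn : 0 ≤ tH :=
    intervalIntegral.integral_nonneg hab.le (fun u _ => hhnn u)
  refine ⟨-(tH + ε) / (K * ρ), by
    apply div_neg_of_neg_of_pos (by linarith) (by positivity), ?_⟩
  intro l hl Θ hΘc hincr x hx y hy hxy hband
  have hΛneg : -(tH + ε) / (K * ρ) < 0 :=
    div_neg_of_neg_of_pos (by linarith) (by positivity)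
  have hlneg : l < 0 := lt_of_le_of_lt hl hΛneg
  have hkey := key_est hp hq hr hs hrpos hlneg.le hΘc hincr hK.le hx hy hxy hband
  have hrnn : 0 ≤ ∫ u in x..y, r u := by
    apply intervalIntegral.integral_nonneg_of_ae_restrict hxy
    have := ae_restrict_of_ae_restrict_of_subset (Icc_subset_Icc hx.1 hy.2) hrpos
    exact this.mono fun u hu => hu.le
  have hHxy : (∫ u in x..y, (|1 / p u| + |s u| + |q u|))
      = (∫ u in a..y, (|1 / p u| + |s u| + |q u|))
        - ∫ u in a..x, (|1 / p u| + |s u| + |q u|) := by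
    have hadd := intervalIntegral.integral_add_adjacent_intervals
      (II hh haIcc hx) (II hh hx hy)
    linarith
  by_cases hcase : y - x ≤ δ
  · -- short interval
    have hdist := hδ₀' y hy x hx (by
      rw [Real.dist_eq, abs_of_nonneg (by linarith)]
      linarith)
    rw [Real.dist_eq] at hdist
    have hHle : (∫ u in x..y, (|1 / p u| + |s u| + |q u|)) < ε := by
      rw [hHxy]
      calc (∫ u in a..y, (|1 / p u| + |s u| + |q u|))
            - ∫ u in a..x, (|1 / p u| + |s u| + |q u|)
          ≤ |(∫ u in a..y, (|1 / p u| + |s u| + |q u|))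
            - ∫ u in a..x, (|1 / p u| + |s u| + |q u|)| := le_abs_self _
        _ < ε := hdist
    have hl0 : l * (K * ∫ u in x..y, r u) ≤ 0 :=
      mul_nonpos_iff.2 (Or.inr ⟨hlneg.le, mul_nonneg hK.le hrnn⟩)
    linarith
  · -- long interval
    push_neg at hcase
    have hxmem' : x ∈ Icc a (b - δ) := ⟨hx.1, by linarith [hy.2]⟩
    have hxδ : x + δ ∈ Icc a b := hmapsto x hxmem'
    have hρle : ρ ≤ ∫ u in x..y, r u := by
      have h1 := hx₀min hxmem'
      simp only [Set.mem_setOf_eq] at h1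
      rw [hwin x hxmem'] at h1
      have hsplit := intervalIntegral.integral_add_adjacent_intervals
        (II hr hx hxδ) (II hr hxδ hy)
      have h2nn : 0 ≤ ∫ u in (x + δ)..y, r u := by
        apply intervalIntegral.integral_nonneg_of_ae_restrict (by linarith)
        have := ae_restrict_of_ae_restrict_of_subset (Icc_subset_Icc hxδ.1 hy.2) hrpos
        exact this.mono fun u hu => hu.le
      rw [hρdef]
      linarith
    have hHtot : (∫ u in x..y, (|1 / p u| + |s u| + |q u|)) ≤ tH := by
      have e1 := intervalIntegral.integral_add_adjacent_intervals
        (II hh haIcc hx) (II hh hx hy)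
      have e2 := intervalIntegral.integral_add_adjacent_intervals
        (II hh haIcc hy) (II hh hy hbIcc)
      have n1 : 0 ≤ ∫ u in a..x, (|1 / p u| + |s u| + |q u|) :=
        intervalIntegral.integral_nonneg hx.1 (fun u _ => hhnn u)
      have n2 : 0 ≤ ∫ u in y..b, (|1 / p u| + |s u| + |q u|) :=
        intervalIntegral.integral_nonneg hy.2 (fun u _ => hhnn u)
      rw [htHdef]
      linarith
    have hstep : l * (K * ∫ u in x..y, r u) ≤ l * (K * ρ) :=
      mul_le_mul_of_nonpos_left (mul_le_mul_of_nonneg_left hρle hK.le) hlneg.le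
    have hΛstep : l * (K * ρ) ≤ (-(tH + ε) / (K * ρ)) * (K * ρ) :=
      mul_le_mul_of_nonneg_right hl (by positivity)
    have hΛval : (-(tH + ε) / (K * ρ)) * (K * ρ) = -(tH + ε) := by
      field_simp
    have c1 : l * (K * ∫ u in x..y, r u) ≤ -(tH + ε) :=
      calc l * (K * ∫ u in x..y, r u) ≤ l * (K * ρ) := hstep
        _ ≤ -(tH + ε) / (K * ρ) * (K * ρ) := hΛstep
        _ = -(tH + ε) := hΛval
    linarith [hkey, hHtot, c1, hε0]
end Stmt11Aux2

open Stmt11Aux Stmt11Aux2 in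
/-- The Prüfer angle tends to `0` as the spectral parameter tends to `−∞`: if
`θ(·,λ)` solves `θ′ = (1/p)cos²θ − s·sin 2θ + (λr − q)·sin²θ` (integral form) with
`θ(a,λ) = α ∈ [0,π)`, then for every `t ∈ (a,b]`, `θ(t,λ) → 0` as `λ → −∞`. -/
theorem stmt11 (a b : ℝ) (hab : a < b) (p q r s : ℝ → ℝ)
    (hp : IntegrableOn (fun x => 1 / p x) (Set.Ioo a b))
    (hq : IntegrableOn q (Set.Ioo a b))
    (hr : IntegrableOn r (Set.Ioo a b))
    (hs : IntegrableOn s (Set.Ioo a b))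
    (hppos : ∀ᵐ x ∂(volume.restrict (Set.Ioo a b)), 0 < p x)
    (hrpos : ∀ᵐ x ∂(volume.restrict (Set.Ioo a b)), 0 < r x)
    (α : ℝ) (hα : α ∈ Set.Ico 0 Real.pi)
    (θ : ℝ → ℝ → ℝ)
    (hθcont : ∀ lam : ℝ, ContinuousOn (θ lam) (Set.Icc a b))
    (hθinit : ∀ lam : ℝ, θ lam a = α)
    (hθsol : ∀ lam : ℝ, ∀ x ∈ Set.Icc a b,
      θ lam x = α + ∫ t in a..x,
        (1 / p t * Real.cos (θ lam t) ^ 2 - s t * Real.sin (2 * θ lam t)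
          + (lam * r t - q t) * Real.sin (θ lam t) ^ 2)) :
    ∀ t ∈ Set.Ioc a b, Filter.Tendsto (fun lam => θ lam t) Filter.atBot (nhds 0) := by
  -- upgrade the hypotheses from `Ioo` to `Icc`
  have hres : volume.restrict (Icc a b) = volume.restrict (Ioo a b) :=
    Measure.restrict_congr_set Ioo_ae_eq_Icc.symm
  have hp' : IntegrableOn (fun x => 1 / p x) (Icc a b) :=
    (integrableOn_Icc_iff_integrableOn_Ioo enorm_ne_top enorm_ne_top).2 hp
  have hq' : IntegrableOn q (Icc a b) := (integrableOn_Icc_iff_integrableOn_Ioo enorm_ne_top enorm_ne_top).2 hq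
  have hr' : IntegrableOn r (Icc a b) := (integrableOn_Icc_iff_integrableOn_Ioo enorm_ne_top enorm_ne_top).2 hr
  have hs' : IntegrableOn s (Icc a b) := (integrableOn_Icc_iff_integrableOn_Ioo enorm_ne_top enorm_ne_top).2 hs
  have hppos' : ∀ᵐ x ∂(volume.restrict (Icc a b)), 0 < p x := by rw [hres]; exact hppos
  have hrpos' : ∀ᵐ x ∂(volume.restrict (Icc a b)), 0 < r x := by rw [hres]; exact hrpos
  have haIcc : a ∈ Icc a b := left_mem_Icc.2 hab.le
  -- increment identity
  have hincr : ∀ l : ℝ, ∀ x ∈ Icc a b, ∀ y ∈ Icc a b, θ l y - θ l x = ∫ u in x..y,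
      (1 / p u * Real.cos (θ l u) ^ 2 - s u * Real.sin (2 * θ l u)
        + (l * r u - q u) * Real.sin (θ l u) ^ 2) := by
    intro l x hx y hy
    have hFint := integrandIntegrable hp' hq' hr' hs' l (hθcont l)
    have hadd := intervalIntegral.integral_add_adjacent_intervals
      (II hFint haIcc hx) (II hFint hx hy)
    have h1 := hθsol l x hx
    have h2 := hθsol l y hy
    linarith
  -- nonnegativity of θ
  have hnn : ∀ l : ℝ, ∀ x ∈ Icc a b, 0 ≤ θ l x := fun l =>
    theta_nonneg hab hp' hq' hr' hs' hppos' (hθcont l) (hincr l)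
      (by rw [hθinit l]; exact hα.1)
  intro t ht
  have htIcc : t ∈ Icc a b := ⟨ht.1.le, ht.2⟩
  rw [Metric.tendsto_nhds]
  intro ε₀ hε₀
  -- choose ε
  set ε : ℝ := min ε₀ (π - α) / 4 with hεdef
  have hπα : 0 < π - α := by linarith [hα.2]
  have hε0 : 0 < ε := by
    have : 0 < min ε₀ (π - α) := lt_min hε₀ hπα
    rw [hεdef]; linarith
  have hεπα : ε ≤ (π - α) / 4 := by
    rw [hεdef]; have := min_le_right ε₀ (π - α); linarith
  have hεε₀ : ε ≤ ε₀ / 4 := by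
    rw [hεdef]; have := min_le_left ε₀ (π - α); linarith
  have hεπ4 : ε ≤ π / 4 := by linarith [hα.1]
  have hεπ2 : ε ≤ π / 2 := by linarith [Real.pi_pos]
  have hαε : α ≤ π - 2 * ε := by linarith
  have hε3 : 3 * ε ≤ π := by linarith [Real.pi_pos]
  have hεltπ : ε < π := by linarith [Real.pi_pos]
  have hK : 0 < Real.sin ε ^ 2 :=
    pow_pos (Real.sin_pos_of_pos_of_lt_pi hε0 hεltπ) 2
  clear_value ε
  -- no-climb constant
  obtain ⟨Λ₁, hΛ₁neg, hΛ₁⟩ := noclimb hab hp' hq' hr' hs' hrpos' hε0 hK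
  -- constant for the all-in-band case
  have hRta : 0 < ∫ u in a..t, r u := integral_r_pos hr' hrpos' haIcc htIcc ht.1
  have hHtnn : 0 ≤ ∫ u in a..t, (|1 / p u| + |s u| + |q u|) :=
    intervalIntegral.integral_nonneg ht.1.le (fun u _ => by positivity)
  set Λ₂ : ℝ := -((α + (∫ u in a..t, (|1 / p u| + |s u| + |q u|)) + 1)
    / (Real.sin ε ^ 2 * ∫ u in a..t, r u)) with hΛ₂def
  clear_value Λ₂
  filter_upwards [Filter.Iic_mem_atBot (min Λ₁ Λ₂)] with l hl
  have hlΛ₁ : l ≤ Λ₁ := le_trans hl (min_le_left _ _)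
  have hlΛ₂ : l ≤ Λ₂ := le_trans hl (min_le_right _ _)
  have hlneg : l < 0 := lt_of_le_of_lt hlΛ₁ hΛ₁neg
  have hΘc := hθcont l
  have hΘt0 : 0 ≤ θ l t := hnn l t htIcc
  -- Step 2 : θ l stays below π - ε on [a, t]
  have hlt_pi : ∀ u ∈ Icc a t, θ l u < π - ε := by
    by_contra hcon
    push_neg at hcon
    obtain ⟨u₀, hu₀m, hu₀⟩ := hcon
    obtain ⟨y₁, hy₁m, hy₁eq, hy₁lt⟩ := first_cross (lev := π - ε)
      (hΘc.mono (Icc_subset_Icc_right ht.2)) ht.1.le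
      (by rw [hθinit l]; linarith) ⟨u₀, hu₀m, hu₀⟩
    have hy₁Icc : y₁ ∈ Icc a b := ⟨hy₁m.1.le, hy₁m.2.trans ht.2⟩
    by_cases hcase : ∃ u ∈ Icc a y₁, θ l u ≤ ε
    · obtain ⟨x, hxm, hxeq, hxgt⟩ := last_cross (lev := ε)
        (hΘc.mono (Icc_subset_Icc_right hy₁Icc.2)) hy₁m.1.le
        (by rw [hy₁eq]; linarith) hcase
      have hxIcc : x ∈ Icc a b := ⟨hxm.1, hxm.2.le.trans hy₁Icc.2⟩
      have hband : ∀ u ∈ Icc x y₁, Real.sin ε ^ 2 ≤ Real.sin (θ l u) ^ 2 := by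
        intro u hu
        have hul : ε ≤ θ l u := by
          rcases eq_or_lt_of_le hu.1 with h | h
          · rw [← h, hxeq]
          · exact (hxgt u ⟨h, hu.2⟩).le
        have huu : θ l u ≤ π - ε := by
          rcases lt_or_eq_of_le hu.2 with h | h
          · exact (hy₁lt u ⟨hxm.1.trans hu.1, h⟩).le
          · rw [h, hy₁eq]
        exact sin_sq_band hε0 hεπ2 hul huu
      have hclimb := hΛ₁ l hlΛ₁ (θ l) hΘc (hincr l) x hxIcc y₁ hy₁Icc
        (hxm.2.le) hband
      rw [hy₁eq, hxeq] at hclimb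
      linarith
    · push_neg at hcase
      have hband : ∀ u ∈ Icc a y₁, Real.sin ε ^ 2 ≤ Real.sin (θ l u) ^ 2 := by
        intro u hu
        have hul : ε ≤ θ l u := (hcase u hu).le
        have huu : θ l u ≤ π - ε := by
          rcases lt_or_eq_of_le hu.2 with h | h
          · exact (hy₁lt u ⟨hu.1, h⟩).le
          · rw [h, hy₁eq]
        exact sin_sq_band hε0 hεπ2 hul huu
      have hclimb := hΛ₁ l hlΛ₁ (θ l) hΘc (hincr l) a haIcc y₁ hy₁Icc hy₁m.1.le hband
      rw [hy₁eq, hθinit l] at hclimb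
      linarith
  -- Step 3 : θ l t < 2 ε
  have hmain : θ l t < 2 * ε := by
    by_contra hcon
    push_neg at hcon
    by_cases hcase : ∃ u ∈ Icc a t, θ l u ≤ ε
    · obtain ⟨x, hxm, hxeq, hxgt⟩ := last_cross (lev := ε)
        (hΘc.mono (Icc_subset_Icc_right ht.2)) ht.1.le (by linarith) hcase
      have hxIcc : x ∈ Icc a b := ⟨hxm.1, hxm.2.le.trans ht.2⟩
      have hband : ∀ u ∈ Icc x t, Real.sin ε ^ 2 ≤ Real.sin (θ l u) ^ 2 := by
        intro u hu
        have hul : ε ≤ θ l u := by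
          rcases eq_or_lt_of_le hu.1 with h | h
          · rw [← h, hxeq]
          · exact (hxgt u ⟨h, hu.2⟩).le
        have huu : θ l u ≤ π - ε := (hlt_pi u ⟨hxm.1.trans hu.1, hu.2⟩).le
        exact sin_sq_band hε0 hεπ2 hul huu
      have hclimb := hΛ₁ l hlΛ₁ (θ l) hΘc (hincr l) x hxIcc t htIcc hxm.2.le hband
      rw [hxeq] at hclimb
      linarith
    · push_neg at hcase
      have hband : ∀ u ∈ Icc a t, Real.sin ε ^ 2 ≤ Real.sin (θ l u) ^ 2 := by
        intro u hu
        exact sin_sq_band hε0 hεπ2 (hcase u hu).le (hlt_pi u hu).le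
      have hkey := key_est hp' hq' hr' hs' hrpos' hlneg.le hΘc (hincr l) hK.le
        haIcc htIcc ht.1.le hband
      rw [hθinit l] at hkey
      -- hkey : θ l t - α ≤ Ht + l * (K * Rta)
      have hD : 0 < Real.sin ε ^ 2 * ∫ u in a..t, r u := by positivity
      have hΛ₂val : Λ₂ * (Real.sin ε ^ 2 * ∫ u in a..t, r u)
          = -(α + (∫ u in a..t, (|1 / p u| + |s u| + |q u|)) + 1) := by
        rw [hΛ₂def]
        field_simp [(Real.sin_pos_of_pos_of_lt_pi hε0 hεltπ).ne']
      have hstep : l * (Real.sin ε ^ 2 * ∫ u in a..t, r u)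
          ≤ Λ₂ * (Real.sin ε ^ 2 * ∫ u in a..t, r u) :=
        mul_le_mul_of_nonneg_right hlΛ₂ hD.le
      nlinarith [hkey, hΛ₂val, hstep, hΘt0, hα.1, hHtnn]
  rw [Real.dist_eq, sub_zero, abs_of_nonneg hΘt0]
  linarith
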